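/- For α, β > -1, k ≥ 1, any C^k function f on (0,π), and θ ∈ (0,π), the higher-order derivative admits the factorization D^{(k)} f(θ) = Ψ^{α,β}(θ) (sin θ)^k ((1/sin θ) d/dθ)^k ( f(θ)/Ψ^{α,β}(θ) ), where D^{(k)} = D_{α+k-1,β+k-1} ∘ ⋯ ∘ D_{α,β} and Ψ^{α,β}(θ) = (sin(θ/2))^{α+1/2}(cos(θ/2))^{β+1/2}. -/

import Mathlib

open Real MeasureTheory Set

/-- Classical Jacobi polynomial (Szegő normalization), via the explicit sum. -/
noncomputable def jacobiP (α β : ℝ) (n : ℕ) (x : ℝ) : ℝ :=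
  (Real.Gamma (α + n + 1) / ((Nat.factorial n : ℝ) * Real.Gamma (α + β + n + 1))) *
    ∑ m ∈ Finset.range (n + 1),
      (Nat.choose n m : ℝ) * (Real.Gamma (α + β + n + m + 1) / Real.Gamma (α + m + 1)) *
        ((x - 1) / 2) ^ m

/-- Ψ^{α,β}(θ) = (sin(θ/2))^{α+1/2} (cos(θ/2))^{β+1/2}. -/
noncomputable def psiF (α β θ : ℝ) : ℝ :=
  Real.sin (θ / 2) ^ (α + 1/2) * Real.cos (θ / 2) ^ (β + 1/2)

/-- Normalizing constant making φ_n^{α,β} of unit L²(0,π)-norm. -/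
noncomputable def jacobiC (α β : ℝ) (n : ℕ) : ℝ :=
  (Real.sqrt (∫ θ in Set.Ioo (0:ℝ) Real.pi,
    (psiF α β θ * jacobiP α β n (Real.cos θ)) ^ 2))⁻¹

/-- Jacobi trigonometric function φ_n^{α,β}. -/
noncomputable def phiF (α β : ℝ) (n : ℕ) (θ : ℝ) : ℝ :=
  psiF α β θ * jacobiC α β n * jacobiP α β n (Real.cos θ)

/-- First order Jacobi derivative D_{α,β}. -/
noncomputable def jacobiD (α β : ℝ) (f : ℝ → ℝ) (θ : ℝ) : ℝ :=
  deriv f θ - ((2*α+1)/4) * (Real.cos (θ/2) / Real.sin (θ/2)) * f θ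
    + ((2*β+1)/4) * Real.tan (θ/2) * f θ

/-- Formal adjoint D_{α,β}* = D_{α,β} - 2 d/dθ. -/
noncomputable def jacobiDStar (α β : ℝ) (f : ℝ → ℝ) (θ : ℝ) : ℝ :=
  jacobiD α β f θ - 2 * deriv f θ

/-- Higher order derivative D^{(k)} = D_{α+k-1,β+k-1} ∘ ⋯ ∘ D_{α,β}. -/
noncomputable def jacobiDk (α β : ℝ) : ℕ → (ℝ → ℝ) → ℝ → ℝ
  | 0 => fun f => f
  | (k+1) => fun f => jacobiD (α + k) (β + k) (jacobiDk α β k f)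

/-- Adjoint higher order derivative (D^{(k)})* = D_{α,β}* ∘ ⋯ ∘ D_{α+k-1,β+k-1}*. -/
noncomputable def jacobiDkStar (α β : ℝ) : ℕ → (ℝ → ℝ) → ℝ → ℝ
  | 0 => fun f => f
  | (k+1) => fun f => jacobiDStar α β (jacobiDkStar (α+1) (β+1) k f)

/-- The operator g ↦ g'/sin θ. -/
noncomputable def sinD (g : ℝ → ℝ) : ℝ → ℝ := fun θ => deriv g θ / Real.sin θ

lemma sin_half_pos {θ : ℝ} (hθ : θ ∈ Set.Ioo (0:ℝ) Real.pi) : 0 < Real.sin (θ/2) :=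
  Real.sin_pos_of_pos_of_lt_pi (by linarith [hθ.1]) (by linarith [hθ.2, Real.pi_pos])

lemma cos_half_pos {θ : ℝ} (hθ : θ ∈ Set.Ioo (0:ℝ) Real.pi) : 0 < Real.cos (θ/2) :=
  Real.cos_pos_of_mem_Ioo ⟨by linarith [hθ.1, Real.pi_pos], by linarith [hθ.2]⟩

lemma sin_eq_double {θ : ℝ} : Real.sin θ = 2 * Real.sin (θ/2) * Real.cos (θ/2) := by
  rw [show θ = 2 * (θ/2) by ring, Real.sin_two_mul]; ring_nf

lemma psiF_pos {α β θ : ℝ} (hθ : θ ∈ Set.Ioo (0:ℝ) Real.pi) : 0 < psiF α β θ :=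
  mul_pos (Real.rpow_pos_of_pos (sin_half_pos hθ) _) (Real.rpow_pos_of_pos (cos_half_pos hθ) _)

lemma psiF_hasDerivAt (γ δ : ℝ) {θ : ℝ} (hθ : θ ∈ Set.Ioo (0:ℝ) Real.pi) :
    HasDerivAt (psiF γ δ)
      (psiF γ δ θ * ((2*γ+1)/4 * (Real.cos (θ/2) / Real.sin (θ/2))
        - (2*δ+1)/4 * (Real.sin (θ/2) / Real.cos (θ/2)))) θ := by
  have hs := sin_half_pos hθ
  have hc := cos_half_pos hθ
  have hhalf : HasDerivAt (fun t : ℝ => t/2) (1/2 : ℝ) θ := by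
    simpa using (hasDerivAt_id θ).div_const 2
  have hsin : HasDerivAt (fun t : ℝ => Real.sin (t/2)) (Real.cos (θ/2) * (1/2)) θ :=
    by have := (Real.hasDerivAt_sin (θ/2)).comp θ hhalf; exact this
  have hcos : HasDerivAt (fun t : ℝ => Real.cos (t/2)) (-Real.sin (θ/2) * (1/2)) θ :=
    by have := (Real.hasDerivAt_cos (θ/2)).comp θ hhalf; exact this
  have h1 : HasDerivAt (fun t : ℝ => Real.sin (t/2) ^ (γ + 1/2))
      (Real.cos (θ/2) * (1/2) * (γ + 1/2) * Real.sin (θ/2) ^ (γ + 1/2 - 1)) θ :=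
    hsin.rpow_const (Or.inl hs.ne')
  have h2 : HasDerivAt (fun t : ℝ => Real.cos (t/2) ^ (δ + 1/2))
      (-Real.sin (θ/2) * (1/2) * (δ + 1/2) * Real.cos (θ/2) ^ (δ + 1/2 - 1)) θ :=
    hcos.rpow_const (Or.inl hc.ne')
  have := h1.mul h2
  refine this.congr_deriv ?_
  have e1 : Real.sin (θ/2) ^ (γ + 1/2 - 1)
      = Real.sin (θ/2) ^ (γ + 1/2) / Real.sin (θ/2) := by
    rw [Real.rpow_sub hs, Real.rpow_one]
  have e2 : Real.cos (θ/2) ^ (δ + 1/2 - 1)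
      = Real.cos (θ/2) ^ (δ + 1/2) / Real.cos (θ/2) := by
    rw [Real.rpow_sub hc, Real.rpow_one]
  rw [psiF, e1, e2]
  field_simp
  ring

lemma jacobiD_psi_mul (γ δ : ℝ) {θ : ℝ} (hθ : θ ∈ Set.Ioo (0:ℝ) Real.pi) (u : ℝ → ℝ)
    (hu : DifferentiableAt ℝ u θ) :
    jacobiD γ δ (fun t => psiF γ δ t * u t) θ = psiF γ δ θ * deriv u θ := by
  have hd := (psiF_hasDerivAt γ δ hθ).mul hu.hasDerivAt
  have htan : Real.tan (θ/2) = Real.sin (θ/2) / Real.cos (θ/2) := Real.tan_eq_sin_div_cos _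
  rw [jacobiD, show (fun t => psiF γ δ t * u t) = psiF γ δ * u from rfl, hd.deriv, htan]
  ring

lemma jacobiD_congr (γ δ : ℝ) {f h : ℝ → ℝ} {θ : ℝ} (he : f =ᶠ[nhds θ] h) :
    jacobiD γ δ f θ = jacobiD γ δ h θ := by
  rw [jacobiD, jacobiD, he.deriv_eq, he.self_of_nhds]

lemma psiF_contDiffOn (α β : ℝ) (n : ℕ) :
    ContDiffOn ℝ n (psiF α β) (Set.Ioo (0:ℝ) Real.pi) := by
  intro θ hθ
  refine ContDiffAt.contDiffWithinAt ?_
  have hs := sin_half_pos hθ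
  have hc := cos_half_pos hθ
  have hsin : ContDiffAt ℝ n (fun t : ℝ => Real.sin (t/2)) θ :=
    (Real.contDiff_sin.comp (contDiff_id.div_const 2)).contDiffAt
  have hcos : ContDiffAt ℝ n (fun t : ℝ => Real.cos (t/2)) θ :=
    (Real.contDiff_cos.comp (contDiff_id.div_const 2)).contDiffAt
  exact (hsin.rpow_const_of_ne hs.ne').mul (hcos.rpow_const_of_ne hc.ne')

lemma sinD_contDiffOn {n : ℕ} {u : ℝ → ℝ}
    (hu : ContDiffOn ℝ (n+1 : ℕ) u (Set.Ioo (0:ℝ) Real.pi)) :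
    ContDiffOn ℝ n (sinD u) (Set.Ioo (0:ℝ) Real.pi) := by
  have hd : ContDiffOn ℝ n (deriv u) (Set.Ioo (0:ℝ) Real.pi) := by
    refine hu.deriv_of_isOpen isOpen_Ioo ?_
    exact_mod_cast le_of_eq (by push_cast; ring)
  exact hd.div (Real.contDiff_sin.contDiffOn)
    (fun θ hθ => (Real.sin_pos_of_pos_of_lt_pi hθ.1 hθ.2).ne')

lemma sinD_iter_contDiffOn : ∀ (k n : ℕ) (u : ℝ → ℝ),
    ContDiffOn ℝ (n + k : ℕ) u (Set.Ioo (0:ℝ) Real.pi) →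
    ContDiffOn ℝ n (sinD^[k] u) (Set.Ioo (0:ℝ) Real.pi) := by
  intro k
  induction k with
  | zero => intro n u hu; simpa using hu
  | succ k ih =>
    intro n u hu
    rw [Function.iterate_succ_apply]
    refine ih n (sinD u) (sinD_contDiffOn ?_)
    exact_mod_cast hu.of_le (by exact_mod_cast le_of_eq (by omega))

lemma psiF_shift (α β : ℝ) (k : ℕ) {t : ℝ} (ht : t ∈ Set.Ioo (0:ℝ) Real.pi) :
    psiF α β t * Real.sin t ^ k = psiF (α + k) (β + k) t * 2 ^ k := by
  have hs := sin_half_pos ht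
  have hc := cos_half_pos ht
  rw [sin_eq_double, psiF, psiF,
    show α + (k:ℝ) + 1/2 = (α + 1/2) + (k:ℝ) by ring,
    show β + (k:ℝ) + 1/2 = (β + 1/2) + (k:ℝ) by ring,
    Real.rpow_add hs (α + 1/2) (k:ℝ), Real.rpow_add hc (β + 1/2) (k:ℝ),
    Real.rpow_natCast, Real.rpow_natCast]
  ring

lemma jacobiDk_factorization_aux (α β : ℝ) : ∀ (k : ℕ) (f : ℝ → ℝ),
    ContDiffOn ℝ k f (Set.Ioo (0:ℝ) Real.pi) →
    ∀ θ ∈ Set.Ioo (0:ℝ) Real.pi,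
      jacobiDk α β k f θ
        = psiF α β θ * Real.sin θ ^ k * (sinD^[k] (fun t => f t / psiF α β t)) θ := by
  intro k
  induction k with
  | zero =>
    intro f _ θ hθ
    simp [jacobiDk, mul_div_cancel₀ _ (psiF_pos hθ).ne']
  | succ k ih =>
    intro f hf θ hθ
    set g : ℝ → ℝ := fun t => f t / psiF α β t with hg_def
    have hg : ContDiffOn ℝ (k+1 : ℕ) g (Set.Ioo (0:ℝ) Real.pi) :=
      hf.div (psiF_contDiffOn α β (k+1)) (fun t ht => (psiF_pos ht).ne')
    have hgk : ContDiffOn ℝ (1 : ℕ) (sinD^[k] g) (Set.Ioo (0:ℝ) Real.pi) := by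
      refine sinD_iter_contDiffOn k 1 g ?_
      exact_mod_cast hg.of_le (by exact_mod_cast le_of_eq (by omega))
    have hdiff : DifferentiableAt ℝ (sinD^[k] g) θ := by
      have := (hgk.differentiableOn (by simp)).differentiableAt
        (isOpen_Ioo.mem_nhds hθ)
      exact this
    have hfk : ContDiffOn ℝ (k : ℕ) f (Set.Ioo (0:ℝ) Real.pi) :=
      hf.of_le (by exact_mod_cast Nat.le_succ k)
    have heq : jacobiDk α β k f
        =ᶠ[nhds θ] fun t => psiF (α + k) (β + k) t * (2 ^ k * sinD^[k] g t) := by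
      refine Filter.eventuallyEq_of_mem (isOpen_Ioo.mem_nhds hθ) (fun t ht => ?_)
      rw [ih f hfk t ht]
      have := psiF_shift α β k ht
      calc psiF α β t * Real.sin t ^ k * sinD^[k] g t
          = (psiF α β t * Real.sin t ^ k) * sinD^[k] g t := by ring
        _ = (psiF (α + k) (β + k) t * 2 ^ k) * sinD^[k] g t := by rw [this]
        _ = psiF (α + k) (β + k) t * (2 ^ k * sinD^[k] g t) := by ring
    have step : jacobiDk α β (k+1) f θ
        = jacobiD (α + k) (β + k) (jacobiDk α β k f) θ := rfl
    rw [step, jacobiD_congr _ _ heq,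
      jacobiD_psi_mul (α + k) (β + k) hθ _ (hdiff.const_mul (2^k : ℝ)),
      deriv_const_mul _ hdiff]
    have hsinθ : Real.sin θ ≠ 0 :=
      (Real.sin_pos_of_pos_of_lt_pi hθ.1 hθ.2).ne'
    rw [Function.iterate_succ_apply']
    have hshift := psiF_shift α β k hθ
    show psiF (α + k) (β + k) θ * (2 ^ k * deriv (sinD^[k] g) θ)
        = psiF α β θ * Real.sin θ ^ (k+1) * (deriv (sinD^[k] g) θ / Real.sin θ)
    rw [pow_succ]
    field_simp
    rw [← hshift]
    ring

theorem jacobiDk_factorization (α β : ℝ) (hα : -1 < α) (hβ : -1 < β) (k : ℕ) (hk : 1 ≤ k)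
    (f : ℝ → ℝ) (hf : ContDiffOn ℝ k f (Set.Ioo (0:ℝ) Real.pi)) :
    ∀ θ ∈ Set.Ioo (0:ℝ) Real.pi,
      jacobiDk α β k f θ
        = psiF α β θ * Real.sin θ ^ k * (sinD^[k] (fun t => f t / psiF α β t)) θ := by
  intro θ hθ
  exact jacobiDk_factorization_aux α β k f hf θ hθ
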